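/- Let s ≥ 2, let G be an s-step nilpotent group, and let H be a subgroup of G containing the commutator subgroup [G,G]. If H/[G,G] is cyclic, then H is nilpotent of step at most s − 1. -/

import Mathlib

private lemma lcs_succ_eq (G : Type*) [Group G] (n : ℕ) :
    (⊤ : Subgroup G).lowerCentralSeries (n + 1) = ⁅(⊤ : Subgroup G).lowerCentralSeries n, ⊤⁆ := rfl


open scoped commutatorElement in
theorem cyclic_over_commutator_lower_step {G : Type*} [Group G] (s : ℕ) (hs : 2 ≤ s)
    (hG : (⊤ : Subgroup G).lowerCentralSeries s = ⊥)
    (H : Subgroup G) (hcomm : commutator G ≤ H)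
    (hcyc : ∃ x : Abelianization G, Subgroup.map Abelianization.of H = Subgroup.zpowers x) :
    (⊤ : Subgroup ↥H).lowerCentralSeries (s - 1) = ⊥ := by
  obtain ⟨x, hx⟩ := hcyc
  obtain ⟨x₀, rfl⟩ : ∃ x₀ : G, Abelianization.of x₀ = x := Quot.exists_rep x
  -- every element of H is x₀^m * c with c in the commutator subgroup
  have hdec : ∀ a ∈ H, ∃ (m : ℤ) (c : G), c ∈ commutator G ∧ a = x₀ ^ m * c := by
    intro a ha
    have hmem : Abelianization.of a ∈ Subgroup.zpowers (Abelianization.of x₀) := by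
      rw [← hx]; exact ⟨a, ha, rfl⟩
    rw [Subgroup.mem_zpowers_iff] at hmem
    obtain ⟨m, hm⟩ := hmem
    refine ⟨m, (x₀ ^ m)⁻¹ * a, ?_, by group⟩
    have h1 : Abelianization.of ((x₀ ^ m)⁻¹ * a) = 1 := by
      rw [map_mul, map_inv, map_zpow, hm]; group
    exact (QuotientGroup.eq_one_iff _).mp h1
  set N := (⊤ : Subgroup G).lowerCentralSeries 2 with hN
  haveI : N.Normal := inferInstance
  set π := QuotientGroup.mk' N with hπ
  have h2 : (⊤ : Subgroup G).lowerCentralSeries 2 = ⁅commutator G, (⊤ : Subgroup G)⁆ := by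
    rw [show (2:ℕ) = 1+1 from rfl, lcs_succ_eq, Subgroup.top_lowerCentralSeries_one]
  have hcent : ∀ c ∈ commutator G, π c ∈ Subgroup.center (G ⧸ N) := by
    intro c hc
    rw [Subgroup.mem_center_iff]
    intro q
    obtain ⟨g, rfl⟩ := QuotientGroup.mk'_surjective N q
    have hmemN : ⁅g, c⁆ ∈ N := by
      rw [hN, h2, Subgroup.commutator_comm]
      exact Subgroup.commutator_mem_commutator (Subgroup.mem_top g) hc
    have h1 : π ⁅g, c⁆ = 1 := by
      rw [hπ, QuotientGroup.mk'_apply, QuotientGroup.eq_one_iff]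
      exact hmemN
    rw [map_commutatorElement] at h1
    exact (commutatorElement_eq_one_iff_commute.mp h1).eq
  have hbase : ∀ a ∈ H, ∀ b ∈ H, ⁅a, b⁆ ∈ N := by
    intro a ha b hb
    obtain ⟨m, c, hc, rfl⟩ := hdec a ha
    obtain ⟨n, d, hd, rfl⟩ := hdec b hb
    have hone : π ⁅x₀ ^ m * c, x₀ ^ n * d⁆ = 1 := by
      rw [map_commutatorElement, commutatorElement_eq_one_iff_commute, map_mul, map_mul]
      have hc' := hcent c hc
      have hd' := hcent d hd
      have h0 : Commute (π (x₀ ^ m)) (π (x₀ ^ n)) := by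
        simp only [map_zpow]
        exact (Commute.refl (π x₀)).zpow_zpow m n
      have hA : Commute (π (x₀ ^ m)) (π (x₀ ^ n) * π d) :=
        h0.mul_right (Subgroup.mem_center_iff.mp hd' _)
      have hB : Commute (π c) (π (x₀ ^ n) * π d) :=
        (Subgroup.mem_center_iff.mp hc' _).symm
      exact hA.mul_left hB
    rw [hπ, QuotientGroup.mk'_apply, QuotientGroup.eq_one_iff] at hone
    exact hone
  have key : ∀ n : ℕ, Subgroup.map H.subtype ((⊤ : Subgroup ↥H).lowerCentralSeries (n+1)) ≤
      (⊤ : Subgroup G).lowerCentralSeries (n+2) := by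
    intro n
    induction n with
    | zero =>
      rw [lcs_succ_eq, Subgroup.lowerCentralSeries_zero, Subgroup.map_commutator]
      have htop : Subgroup.map H.subtype (⊤ : Subgroup ↥H) = H := by
        rw [← MonoidHom.range_eq_map, Subgroup.range_subtype]
      rw [htop]
      rw [Subgroup.commutator_le]
      intro a ha b hb
      exact hbase a ha b hb
    | succ n ih =>
      rw [lcs_succ_eq, Subgroup.map_commutator]
      have htop : Subgroup.map H.subtype (⊤ : Subgroup ↥H) = H := by
        rw [← MonoidHom.range_eq_map, Subgroup.range_subtype]
      rw [htop]
      calc ⁅Subgroup.map H.subtype ((⊤ : Subgroup ↥H).lowerCentralSeries (n+1)), H⁆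
          ≤ ⁅(⊤ : Subgroup G).lowerCentralSeries (n+2), (⊤ : Subgroup G)⁆ :=
            Subgroup.commutator_mono ih le_top
        _ = (⊤ : Subgroup G).lowerCentralSeries (n+3) := (lcs_succ_eq G (n+2)).symm
  have h := key (s - 2)
  have hs' : s - 2 + 1 = s - 1 := by omega
  have hs'' : s - 2 + 2 = s := by omega
  rw [hs', hs'', hG] at h
  rw [eq_bot_iff]
  intro y hy
  have : H.subtype y ∈ (⊥ : Subgroup G) := h ⟨y, hy, rfl⟩
  rw [Subgroup.mem_bot] at this
  exact Subgroup.mem_bot.mpr (Subtype.ext this)
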